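/- The limit lim_{n→∞} ∫_{n^{−1/6}}^{n^{1/6}} cos(x/√n) / (n sin²(x/(4√n)) + cos²(x/√n)) dx = 2π holds, where the integral is over the real interval [n^{−1/6}, n^{1/6}]. -/

import Mathlib

open Real Filter intervalIntegral MeasureTheory Set

private lemma aux_tendsto_sin_div :
    Tendsto (fun u : ℝ => Real.sin u / u) (nhdsWithin 0 {(0:ℝ)}ᶜ) (nhds 1) := by
  have h := hasDerivAt_iff_tendsto_slope.mp (Real.hasDerivAt_sin 0)
  rw [Real.cos_zero] at h
  refine h.congr fun u => ?_
  simp [slope_def_field]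

private lemma aux_integral_L :
    ∫ x in Ioi (0:ℝ), (1 + (x / 4) ^ 2)⁻¹ = 2 * π := by
  have hd : ∀ x ∈ Ici (0:ℝ),
      HasDerivAt (fun y : ℝ => 4 * Real.arctan (y / 4)) ((1 + (x / 4) ^ 2)⁻¹) x := by
    intro x _
    have h1 : HasDerivAt (fun y : ℝ => y / 4) (1 / 4) x := by
      simpa using (hasDerivAt_id x).div_const 4
    have h2 := (Real.hasDerivAt_arctan (x / 4)).comp x h1
    have h3 := h2.const_mul (4:ℝ)
    exact h3.congr_deriv (by ring)
  have hint : IntegrableOn (fun x : ℝ => (1 + (x / 4) ^ 2)⁻¹) (Ioi 0) :=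
    (integrable_inv_one_add_sq.comp_div (by norm_num : (4:ℝ) ≠ 0)).integrableOn
  have htend : Tendsto (fun x : ℝ => 4 * Real.arctan (x / 4)) atTop (nhds (4 * (π / 2))) := by
    have h4 : Tendsto (fun x : ℝ => x / 4) atTop atTop :=
      tendsto_id.atTop_div_const (by norm_num)
    exact ((tendsto_nhds_of_tendsto_nhdsWithin Real.tendsto_arctan_atTop).comp h4).const_mul 4
  have := integral_Ioi_of_hasDerivAt_of_tendsto' hd hint htend
  rw [this]
  simp [Real.arctan_zero]
  ring

set_option maxHeartbeats 1000000 in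
theorem limit_integral_two_pi :
    Filter.Tendsto (fun n : ℕ =>
      ∫ x in ((n : ℝ) ^ (-(1 : ℝ) / 6))..((n : ℝ) ^ ((1 : ℝ) / 6)),
        Real.cos (x / Real.sqrt n) /
          ((n : ℝ) * Real.sin (x / (4 * Real.sqrt n)) ^ 2 + Real.cos (x / Real.sqrt n) ^ 2))
      Filter.atTop (nhds (2 * π)) := by
  classical
  set f : ℕ → ℝ → ℝ := fun n x =>
    Real.cos (x / Real.sqrt n) /
      ((n : ℝ) * Real.sin (x / (4 * Real.sqrt n)) ^ 2 + Real.cos (x / Real.sqrt n) ^ 2) with hf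
  set a : ℕ → ℝ := fun n => (n : ℝ) ^ (-(1 : ℝ) / 6) with ha
  set b : ℕ → ℝ := fun n => (n : ℝ) ^ ((1 : ℝ) / 6) with hb
  set μ : Measure ℝ := volume.restrict (Ioi (0:ℝ)) with hμ
  set F : ℕ → ℝ → ℝ := fun n => (Ioc (a n) (b n)).indicator (f n) with hF
  set L : ℝ → ℝ := fun x => (1 + (x / 4) ^ 2)⁻¹ with hL
  set B : ℝ → ℝ := fun x => 2 * (1 + (x / 8) ^ 2)⁻¹ with hB
  -- basic facts
  have hsqrt : Tendsto (fun n : ℕ => Real.sqrt n) atTop atTop := by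
    have h := (tendsto_rpow_atTop (by norm_num : (0:ℝ) < 1/2)).comp
      (tendsto_natCast_atTop_atTop (R := ℝ))
    refine h.congr fun n => ?_
    exact (Real.sqrt_eq_rpow _).symm
  have hbtop : Tendsto b atTop atTop :=
    (tendsto_rpow_atTop (by norm_num : (0:ℝ) < 1/6)).comp tendsto_natCast_atTop_atTop
  have ha0 : Tendsto a atTop (nhds 0) := by
    have h := (tendsto_rpow_neg_atTop (by norm_num : (0:ℝ) < 1/6)).comp
      (tendsto_natCast_atTop_atTop (R := ℝ))
    refine h.congr fun n => ?_
    rw [ha]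
    norm_num
  -- b n / √n → 0
  have hcz : Tendsto (fun n : ℕ => b n / Real.sqrt n) atTop (nhds 0) := by
    have h := (tendsto_rpow_neg_atTop (by norm_num : (0:ℝ) < 1/3)).comp
      (tendsto_natCast_atTop_atTop (R := ℝ))
    refine Tendsto.congr' ?_ h
    filter_upwards [eventually_ge_atTop 1] with n hn
    have hn0 : (0:ℝ) < (n:ℝ) := by exact_mod_cast Nat.lt_of_lt_of_le Nat.zero_lt_one hn
    show ((n:ℝ)) ^ (-(1/3) : ℝ) = b n / Real.sqrt n
    rw [hb, Real.sqrt_eq_rpow, ← Real.rpow_sub hn0]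
    norm_num
  -- measurability
  have hmeas : ∀ n : ℕ, AEStronglyMeasurable (F n) μ := by
    intro n
    have hfm : Measurable (f n) := by
      apply Measurable.div
      · fun_prop
      · fun_prop
    exact ((hfm.indicator measurableSet_Ioc).aestronglyMeasurable)
  -- the bound
  have h_bound : ∀ᶠ n in atTop, ∀ᵐ x ∂μ, ‖F n x‖ ≤ B x := by
    have hev : ∀ᶠ n : ℕ in atTop, 1 ≤ n ∧ b n / Real.sqrt n ≤ 1/2 := by
      filter_upwards [eventually_ge_atTop 1,
        hcz.eventually (eventually_le_nhds (by norm_num : (0:ℝ) < 1/2))] with n h1 h2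
      exact ⟨h1, h2⟩
    filter_upwards [hev] with n ⟨hn1, hn2⟩
    refine ae_of_all _ fun x => ?_
    by_cases hx : x ∈ Ioc (a n) (b n)
    · rw [hF]
      simp only [indicator_of_mem hx]
      have hn0 : (0:ℝ) < (n:ℝ) := by exact_mod_cast Nat.lt_of_lt_of_le Nat.zero_lt_one hn1
      have hs0 : 0 < Real.sqrt n := Real.sqrt_pos.mpr hn0
      have hx0 : 0 < x := lt_trans (Real.rpow_pos_of_pos hn0 _) hx.1
      have hxs : x / Real.sqrt n ≤ 1/2 := by
        calc x / Real.sqrt n ≤ b n / Real.sqrt n := by gcongr; exact hx.2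
          _ ≤ 1/2 := hn2
      have hxs0 : 0 < x / Real.sqrt n := div_pos hx0 hs0
      set t := x / (4 * Real.sqrt n) with htdef
      have ht : t = (x / Real.sqrt n) / 4 := by rw [htdef]; ring
      have ht0 : 0 < t := by rw [ht]; positivity
      have ht1 : t ≤ 1/8 := by rw [ht]; linarith
      have hsin : t / 2 ≤ Real.sin t := by
        have hcube : t ^ 3 ≤ t := by nlinarith [mul_pos ht0 ht0]
        have h := Real.sin_gt_sub_cube ht0
        linarith
      have hsq : Real.sqrt n ^ 2 = (n:ℝ) := Real.sq_sqrt hn0.le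
      have hst : Real.sqrt n * (t / 2) = x / 8 := by
        rw [htdef]; field_simp; ring
      have hden : x ^ 2 / 64 + 1/2 ≤
          (n:ℝ) * Real.sin t ^ 2 + Real.cos (x / Real.sqrt n) ^ 2 := by
        have h1 : (x / 8) ^ 2 ≤ (n:ℝ) * Real.sin t ^ 2 := by
          have : (Real.sqrt n * (t / 2)) ^ 2 ≤ (Real.sqrt n * Real.sin t) ^ 2 := by
            apply pow_le_pow_left₀ (by positivity)
            exact mul_le_mul_of_nonneg_left hsin hs0.le
          rw [hst] at this
          calc (x/8)^2 ≤ (Real.sqrt n * Real.sin t)^2 := this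
            _ = (n:ℝ) * Real.sin t ^ 2 := by rw [mul_pow, hsq]
        have h2 : (1:ℝ)/2 ≤ Real.cos (x / Real.sqrt n) ^ 2 := by
          have hc : 1 - (x / Real.sqrt n) ^ 2 / 2 ≤ Real.cos (x / Real.sqrt n) :=
            Real.one_sub_sq_div_two_le_cos
          have h7 : (7:ℝ)/8 ≤ Real.cos (x / Real.sqrt n) := by nlinarith
          nlinarith
        nlinarith
      have hdenpos : 0 < (n:ℝ) * Real.sin t ^ 2 + Real.cos (x / Real.sqrt n) ^ 2 :=
        lt_of_lt_of_le (by positivity) hden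
      have hB2 : (1 + (x/8)^2) / 2 ≤
          (n:ℝ) * Real.sin t ^ 2 + Real.cos (x / Real.sqrt n) ^ 2 := by
        nlinarith [hden, sq_nonneg x]
      have habs : ‖f n x‖ ≤ 1 / ((n:ℝ) * Real.sin t ^ 2 + Real.cos (x / Real.sqrt n) ^ 2) := by
        rw [hf]
        simp only [Real.norm_eq_abs, abs_div, abs_of_pos hdenpos]
        gcongr
        exact Real.abs_cos_le_one _
        exact le_abs_self _
      refine habs.trans ?_
      have hpos8 : (0:ℝ) < 1 + (x/8)^2 := by positivity
      calc 1 / ((n:ℝ) * Real.sin t ^ 2 + Real.cos (x / Real.sqrt n) ^ 2)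
          ≤ 1 / ((1 + (x/8)^2) / 2) := by
            apply one_div_le_one_div_of_le (by positivity) hB2
        _ = B x := by
            rw [hB]
            have h8 := hpos8.ne'
            field_simp
    · rw [hF]
      simp only [indicator_of_notMem hx, norm_zero]
      rw [hB]; positivity
  -- bound integrable
  have hBint : Integrable B μ :=
    ((integrable_inv_one_add_sq.comp_div (by norm_num : (8:ℝ) ≠ 0)).const_mul 2).restrict
  -- pointwise limit
  have h_lim : ∀ᵐ x ∂μ, Tendsto (fun n => F n x) atTop (nhds (L x)) := by
    rw [hμ, ae_restrict_iff' measurableSet_Ioi]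
    refine ae_of_all _ fun x hx => ?_
    have hx0 : 0 < x := hx
    have hev : ∀ᶠ n : ℕ in atTop, F n x = f n x := by
      filter_upwards [ha0.eventually (eventually_lt_nhds hx0), hbtop.eventually_ge_atTop x]
        with n h1 h2
      rw [hF]
      exact indicator_of_mem (Set.mem_Ioc.mpr ⟨h1, h2⟩) _
    have hu : Tendsto (fun n : ℕ => x / (4 * Real.sqrt n)) atTop (nhds 0) :=
      tendsto_const_nhds.div_atTop (hsqrt.const_mul_atTop (by norm_num))
    have hxs : Tendsto (fun n : ℕ => x / Real.sqrt n) atTop (nhds 0) :=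
      tendsto_const_nhds.div_atTop hsqrt
    have hnum : Tendsto (fun n : ℕ => Real.cos (x / Real.sqrt n)) atTop (nhds 1) := by
      have := (Real.continuous_cos.tendsto 0).comp hxs
      simpa [Function.comp_def] using this
    have hu' : Tendsto (fun n : ℕ => x / (4 * Real.sqrt n)) atTop
        (nhdsWithin 0 {(0:ℝ)}ᶜ) := by
      refine tendsto_nhdsWithin_iff.mpr ⟨hu, ?_⟩
      filter_upwards [eventually_ge_atTop 1] with n hn
      have hn0 : (0:ℝ) < (n:ℝ) := by exact_mod_cast Nat.lt_of_lt_of_le Nat.zero_lt_one hn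
      have hs0 : 0 < Real.sqrt n := Real.sqrt_pos.mpr hn0
      exact (div_pos hx0 (by positivity)).ne'
    have hsin : Tendsto (fun n : ℕ => Real.sqrt n * Real.sin (x / (4 * Real.sqrt n)))
        atTop (nhds (x / 4)) := by
      have h1 : Tendsto (fun n : ℕ =>
          (x / 4) * (Real.sin (x / (4 * Real.sqrt n)) / (x / (4 * Real.sqrt n))))
          atTop (nhds ((x / 4) * 1)) :=
        (aux_tendsto_sin_div.comp hu').const_mul (x / 4)
      rw [mul_one] at h1
      refine Tendsto.congr' ?_ h1
      filter_upwards [eventually_ge_atTop 1] with n hn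
      have hn0 : (0:ℝ) < (n:ℝ) := by exact_mod_cast Nat.lt_of_lt_of_le Nat.zero_lt_one hn
      have hs0 : 0 < Real.sqrt n := Real.sqrt_pos.mpr hn0
      have hu0 : x / (4 * Real.sqrt n) ≠ 0 := (div_pos hx0 (by positivity)).ne'
      field_simp
    have hden : Tendsto (fun n : ℕ =>
        (n:ℝ) * Real.sin (x / (4 * Real.sqrt n)) ^ 2 + Real.cos (x / Real.sqrt n) ^ 2)
        atTop (nhds ((x / 4) ^ 2 + 1 ^ 2)) := by
      have heq : ∀ n : ℕ, (n:ℝ) * Real.sin (x / (4 * Real.sqrt n)) ^ 2 =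
          (Real.sqrt n * Real.sin (x / (4 * Real.sqrt n))) ^ 2 := by
        intro n
        rw [mul_pow, Real.sq_sqrt (Nat.cast_nonneg n)]
      have h1 := (hsin.pow 2).add (hnum.pow 2)
      refine Tendsto.congr (fun n => ?_) h1
      rw [heq]
    have hfx : Tendsto (fun n => f n x) atTop (nhds (L x)) := by
      have h := hnum.div hden (by positivity)
      have hLx : L x = 1 / ((x / 4) ^ 2 + 1 ^ 2) := by
        rw [hL, one_pow, one_div, add_comm]
      rw [hLx]
      simp only [hf]
      exact h
    exact Tendsto.congr' (hev.mono fun n h => h.symm) hfx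
  -- dominated convergence
  have key : Tendsto (fun n => ∫ x, F n x ∂μ) atTop (nhds (∫ x, L x ∂μ)) :=
    MeasureTheory.tendsto_integral_filter_of_dominated_convergence B
      (Eventually.of_forall hmeas) h_bound hBint h_lim
  have hLval : ∫ x, L x ∂μ = 2 * π := by
    rw [hμ, hL]
    exact aux_integral_L
  rw [hLval] at key
  refine Tendsto.congr' ?_ key
  filter_upwards [eventually_ge_atTop 1] with n hn
  have hn0 : (0:ℝ) < (n:ℝ) := by exact_mod_cast Nat.lt_of_lt_of_le Nat.zero_lt_one hn
  have ha0' : 0 < a n := Real.rpow_pos_of_pos hn0 _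
  have hab : a n ≤ b n :=
    Real.rpow_le_rpow_of_exponent_le (by exact_mod_cast hn) (by norm_num)
  have hsub : Ioc (a n) (b n) ∩ Ioi 0 = Ioc (a n) (b n) := by
    apply inter_eq_left.mpr
    intro y hy
    exact lt_trans ha0' hy.1
  rw [hF, hμ, MeasureTheory.integral_indicator measurableSet_Ioc,
    Measure.restrict_restrict measurableSet_Ioc, hsub]
  exact (intervalIntegral.integral_of_le hab).symm
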